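/- Let r ≥ 1 and let σ_1, …, σ_r : ℝ → [0,∞) be Schwartz functions vanishing on (−∞,0), with ∫_ℝ σ_i = 1/2 for each i. Let a_1, …, a_r be non-negative real numbers and let a ≥ a_1 + ⋯ + a_r. Then sup_{x ≥ a} (σ_1∗⋯∗σ_r)(x) ≤ 2^{1−r}·∑_{i=1}^r sup_{x ≥ a_i} σ_i(x). -/

import Mathlib

set_option maxHeartbeats 1000000


open MeasureTheory

/-- Convolution of functions on `ℝ`. -/
noncomputable def rconv (f g : ℝ → ℝ) : ℝ → ℝ := fun x => ∫ y : ℝ, f y * g (x - y)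

/-- Iterated convolution `f 0 ∗ f 1 ∗ ⋯ ∗ f m`. -/
noncomputable def iConvR : (m : ℕ) → (Fin (m + 1) → ℝ → ℝ) → ℝ → ℝ
  | 0, f => f 0
  | m + 1, f => rconv (f 0) (iConvR m (fun i => f i.succ))

lemma schwartz_norm_bdd (f : SchwartzMap ℝ ℝ) : ∃ C, ∀ x, ‖f x‖ ≤ C :=
  ⟨SchwartzMap.seminorm ℝ 0 0 f, fun x => SchwartzMap.norm_le_seminorm ℝ f x⟩

lemma integrand_integrable (f : SchwartzMap ℝ ℝ) {g : ℝ → ℝ} (hgc : Continuous g)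
    (hgb : ∃ C, ∀ x, ‖g x‖ ≤ C) (x : ℝ) :
    Integrable (fun y => f y * g (x - y)) volume := by
  have h := Integrable.bdd_mul (f := fun y => g (x - y)) (g := fun y => f y) (c := hgb.choose)
    (f.integrable (μ := volume)) ((hgc.comp (continuous_const.sub continuous_id)).aestronglyMeasurable)
    (Filter.Eventually.of_forall fun y => hgb.choose_spec _)
  simpa [mul_comm] using h

lemma rconv_eq_convolution (f g : ℝ → ℝ) :
    rconv f g = convolution f g (ContinuousLinearMap.mul ℝ ℝ) volume := by
  funext x
  simp [rconv, convolution_def]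

/-- Properties of the iterated convolution. -/
lemma iConvR_props (m : ℕ) (σ : Fin (m + 1) → SchwartzMap ℝ ℝ)
    (hnonneg : ∀ i x, 0 ≤ σ i x)
    (hsupp : ∀ i, ∀ x : ℝ, x < 0 → σ i x = 0) :
    Continuous (iConvR m (fun i => σ i)) ∧
    Integrable (iConvR m (fun i => σ i)) volume ∧
    (∀ x, 0 ≤ iConvR m (fun i => σ i) x) ∧
    (∀ x : ℝ, x < 0 → iConvR m (fun i => σ i) x = 0) ∧
    (∫ x, iConvR m (fun i => σ i) x) = ∏ i, ∫ x, σ i x ∧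
    (∃ C, ∀ x, ‖iConvR m (fun i => σ i) x‖ ≤ C) := by
  induction m with
  | zero =>
    refine ⟨(σ 0).continuous, (σ 0).integrable, fun x => hnonneg 0 x,
      fun x hx => hsupp 0 x hx, ?_, schwartz_norm_bdd (σ 0)⟩
    simp [iConvR]
  | succ m ih =>
    obtain ⟨Gc, Gi, Gnn, Gsupp, Gint, GC, GCb⟩ :=
      ih (fun i => σ i.succ) (fun i x => hnonneg i.succ x) (fun i x hx => hsupp i.succ x hx)
    set G : ℝ → ℝ := iConvR m (fun i => (σ i.succ : ℝ → ℝ)) with hG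
    have hdef : iConvR (m + 1) (fun i => σ i) = rconv (σ 0) G := rfl
    have hglobint : ∀ x, Integrable (fun y => σ 0 y * G (x - y)) volume :=
      fun x => integrand_integrable (σ 0) Gc ⟨GC, GCb⟩ x
    have hnn : ∀ x, 0 ≤ rconv (σ 0) G x := by
      intro x
      exact integral_nonneg fun y => mul_nonneg (hnonneg 0 y) (Gnn _)
    refine ⟨?_, ?_, hdef ▸ hnn, ?_, ?_, ?_⟩
    · rw [hdef, rconv_eq_convolution]
      refine BddAbove.continuous_convolution_right_of_integrable _ ?_ ((σ 0).integrable (μ := volume)) Gc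
      exact ⟨GC, by rintro r ⟨x, rfl⟩; exact GCb x⟩
    · rw [hdef, rconv_eq_convolution]
      exact ((σ 0).integrable (μ := volume)).integrable_convolution _ Gi
    · intro x hx
      rw [hdef]
      have : (fun y => σ 0 y * G (x - y)) = fun _ => (0 : ℝ) := by
        funext y
        rcases lt_or_ge y 0 with hy | hy
        · rw [hsupp 0 y hy, zero_mul]
        · rw [Gsupp (x - y) (by linarith), mul_zero]
      simp [rconv, this]
    · rw [hdef, rconv_eq_convolution, integral_convolution _ ((σ 0).integrable (μ := volume)) Gi, Gint,
        Fin.prod_univ_succ (f := fun i : Fin (m + 1 + 1) => ∫ x : ℝ, σ i x)]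
      simp [ContinuousLinearMap.mul_apply']
    · refine ⟨(∫ y, σ 0 y) * GC, fun x => ?_⟩
      rw [hdef]
      have h1 : rconv (σ 0) G x ≤ ∫ y, σ 0 y * GC := by
        refine integral_mono (hglobint x) (((σ 0).integrable (μ := volume)).mul_const _) fun y => ?_
        exact mul_le_mul_of_nonneg_left (le_trans (le_abs_self _) (GCb (x - y))) (hnonneg 0 y)
      rw [Real.norm_eq_abs, abs_of_nonneg (hnn x)]
      calc rconv (σ 0) G x ≤ ∫ y, σ 0 y * GC := h1
        _ = (∫ y, σ 0 y) * GC := by rw [integral_mul_const]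

theorem real_conv_tail_bound (m : ℕ) (σ : Fin (m + 1) → SchwartzMap ℝ ℝ)
    (hnonneg : ∀ i x, 0 ≤ σ i x)
    (hsupp : ∀ i, ∀ x : ℝ, x < 0 → σ i x = 0)
    (hone : ∀ i, ∫ x : ℝ, σ i x = 1 / 2)
    (a : Fin (m + 1) → ℝ) (ha : ∀ i, 0 ≤ a i)
    (a₀ : ℝ) (ha₀ : ∑ i, a i ≤ a₀) :
    ∀ x : ℝ, a₀ ≤ x →
      iConvR m (fun i => σ i) x ≤
        (2 : ℝ) ^ (1 - ((m : ℤ) + 1)) * ∑ i, ⨆ y : Set.Ici (a i), σ i y := by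
  have hpow : ∀ k : ℕ, (2 : ℝ) ^ (1 - ((k : ℤ) + 1)) = (1 / 2 : ℝ) ^ k := by
    intro k
    rw [show (1 : ℤ) - ((k : ℤ) + 1) = -(k : ℤ) by ring, zpow_neg, zpow_natCast]
    simp [one_div, inv_pow]
  -- boundedness of restricted ranges
  have hbdd : ∀ (f : SchwartzMap ℝ ℝ) (c : ℝ),
      BddAbove (Set.range fun y : Set.Ici c => f y) := by
    intro f c
    obtain ⟨C, hC⟩ := schwartz_norm_bdd f
    exact ⟨C, by rintro r ⟨y, rfl⟩; exact le_trans (le_abs_self _) (hC y)⟩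
  have hSnn : ∀ (f : SchwartzMap ℝ ℝ) (c : ℝ) (hf : ∀ x, 0 ≤ f x),
      0 ≤ ⨆ y : Set.Ici c, f y := by
    intro f c hf
    exact le_trans (hf c) (le_ciSup (hbdd f c) ⟨c, le_refl c⟩)
  induction m generalizing a₀ with
  | zero =>
    intro x hx
    have hx0 : a 0 ≤ x := le_trans (by simpa using ha₀) hx
    have : σ 0 x ≤ ⨆ y : Set.Ici (a 0), σ 0 y := le_ciSup (hbdd (σ 0) (a 0)) ⟨x, hx0⟩
    simpa [iConvR, hpow 0] using this
  | succ m ih =>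
    intro x hx
    obtain ⟨Gc, Gi, Gnn, Gsupp, Gint, GC, GCb⟩ :=
      iConvR_props m (fun i => σ i.succ) (fun i y => hnonneg i.succ y)
        (fun i y hy => hsupp i.succ y hy)
    set G : ℝ → ℝ := iConvR m (fun i => (σ i.succ : ℝ → ℝ)) with hG
    have hdef0 : iConvR (m + 1) (fun i => σ i) = rconv (σ 0) G := rfl
    have hdef : iConvR (m + 1) (fun i => σ i) x = ∫ y, σ 0 y * G (x - y) := by
      rw [hdef0]; rfl
    have hGint : (∫ y, G y) = (1 / 2 : ℝ) ^ (m + 1) := by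
      rw [Gint]
      simp [hone]
    -- the two sups
    set S0 : ℝ := ⨆ y : Set.Ici (a 0), σ 0 y with hS0
    set B : ℝ := (1 / 2 : ℝ) ^ m * ∑ i : Fin (m + 1), ⨆ y : Set.Ici (a i.succ), σ i.succ y with hB
    have hS0nn : 0 ≤ S0 := hSnn (σ 0) (a 0) (hnonneg 0)
    have hBnn : 0 ≤ B := by
      refine mul_nonneg (by positivity) (Finset.sum_nonneg fun i _ => ?_)
      exact hSnn (σ i.succ) (a i.succ) (hnonneg i.succ)
    -- induction hypothesis for the tail
    have hIH : ∀ z : ℝ, a₀ - a 0 ≤ z → G z ≤ B := by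
      have hsum : ∑ i : Fin (m + 1), a i.succ ≤ a₀ - a 0 := by
        have := ha₀
        rw [Fin.sum_univ_succ] at this
        linarith
      intro z hz
      have := ih (fun i : Fin (m + 1) => σ i.succ) (fun i y => hnonneg i.succ y)
        (fun i y hy => hsupp i.succ y hy) (fun i => hone i.succ)
        (fun i : Fin (m + 1) => a i.succ) (fun i => ha i.succ) (a₀ - a 0) hsum z hz
      rwa [hpow m] at this
    have hint : Integrable (fun y => σ 0 y * G (x - y)) volume :=
      integrand_integrable (σ 0) Gc ⟨GC, GCb⟩ x
    have hsplit : (∫ y, σ 0 y * G (x - y)) =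
        (∫ y in Set.Ici (a 0), σ 0 y * G (x - y)) +
        (∫ y in (Set.Ici (a 0))ᶜ, σ 0 y * G (x - y)) :=
      (integral_add_compl measurableSet_Ici hint).symm
    -- piece 1
    have h1 : (∫ y in Set.Ici (a 0), σ 0 y * G (x - y)) ≤ S0 * (1 / 2 : ℝ) ^ (m + 1) := by
      have step1 : (∫ y in Set.Ici (a 0), σ 0 y * G (x - y)) ≤
          ∫ y in Set.Ici (a 0), S0 * G (x - y) := by
        refine setIntegral_mono_on hint.integrableOn ?_ measurableSet_Ici fun y hy => ?_
        · have : Integrable (fun y => S0 * G (x - y)) volume := by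
            have : Integrable (fun y => G (x - y)) volume := Gi.comp_sub_left x
            exact this.const_mul S0
          exact this.integrableOn
        · exact mul_le_mul_of_nonneg_right (le_ciSup (hbdd (σ 0) (a 0)) ⟨y, hy⟩) (Gnn _)
      have step2 : (∫ y in Set.Ici (a 0), S0 * G (x - y)) ≤ ∫ y, S0 * G (x - y) := by
        refine setIntegral_le_integral ((Gi.comp_sub_left x).const_mul S0) ?_
        exact Filter.Eventually.of_forall fun y => mul_nonneg hS0nn (Gnn _)
      have step3 : (∫ y, S0 * G (x - y)) = S0 * (1 / 2 : ℝ) ^ (m + 1) := by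
        rw [integral_const_mul, integral_sub_left_eq_self G volume x, hGint]
      exact step1.trans (step2.trans_eq step3)
    -- piece 2
    have h2 : (∫ y in (Set.Ici (a 0))ᶜ, σ 0 y * G (x - y)) ≤ (1 / 2) * B := by
      have step1 : (∫ y in (Set.Ici (a 0))ᶜ, σ 0 y * G (x - y)) ≤
          ∫ y in (Set.Ici (a 0))ᶜ, σ 0 y * B := by
        refine setIntegral_mono_on hint.integrableOn
          ((((σ 0).integrable (μ := volume)).mul_const B).integrableOn) measurableSet_Ici.compl
          fun y hy => ?_
        have hy' : y < a 0 := by simpa using hy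
        exact mul_le_mul_of_nonneg_left (hIH (x - y) (by linarith)) (hnonneg 0 y)
      have step2 : (∫ y in (Set.Ici (a 0))ᶜ, σ 0 y * B) ≤ ∫ y, σ 0 y * B := by
        refine setIntegral_le_integral (((σ 0).integrable (μ := volume)).mul_const B) ?_
        exact Filter.Eventually.of_forall fun y => mul_nonneg (hnonneg 0 y) hBnn
      have step3 : (∫ y, σ 0 y * B) = (1 / 2) * B := by
        rw [integral_mul_const, hone 0]
      exact step1.trans (step2.trans_eq step3)
    -- combine
    rw [hpow (m + 1), Fin.sum_univ_succ]
    have : iConvR (m + 1) (fun i => σ i) x ≤ S0 * (1 / 2 : ℝ) ^ (m + 1) + (1 / 2) * B := by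
      rw [hdef, hsplit]; exact add_le_add h1 h2
    calc iConvR (m + 1) (fun i => σ i) x ≤ S0 * (1 / 2 : ℝ) ^ (m + 1) + (1 / 2) * B := this
      _ = (1 / 2 : ℝ) ^ (m + 1) *
          (S0 + ∑ i : Fin (m + 1), ⨆ y : Set.Ici (a i.succ), σ i.succ y) := by rw [hB]; ring
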